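/- Let I = (0,ℓ) and let (y, d₁, d₂, d₃) with y ∈ W^{2,2}(I;ℝ³), (d₁|d₂|d₃)ᵀ ∈ W^{1,2}(I;SO(3)), y' = d₁, and d₁'·d₂ = 0 a.e. Suppose y is planar, i.e. there is a unit vector k with d₁(s)·k = 0 for all s, and suppose d₁'·d₃ > 0 a.e. on I. Then d₂ is constant on I and d₂ = k or d₂ = −k. -/

import Mathlib

open Matrix MeasureTheory

private lemma dot_cross_identity (a b u v : Fin 3 → ℝ) :
    (u ⬝ᵥ (a ⨯₃ b)) * (v ⬝ᵥ (a ⨯₃ b)) =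
      (u ⬝ᵥ v) * ((a ⬝ᵥ a) * (b ⬝ᵥ b) - (a ⬝ᵥ b)^2)
      - (u ⬝ᵥ a) * ((v ⬝ᵥ a) * (b ⬝ᵥ b) - (v ⬝ᵥ b) * (a ⬝ᵥ b))
      + (u ⬝ᵥ b) * ((v ⬝ᵥ a) * (a ⬝ᵥ b) - (v ⬝ᵥ b) * (a ⬝ᵥ a)) := by
  simp [crossProduct, dotProduct, Fin.sum_univ_three]
  ring

private lemma hasDerivAt_dot {f g : ℝ → Fin 3 → ℝ} {f' g' : Fin 3 → ℝ} {t : ℝ}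
    (hf : HasDerivAt f f' t) (hg : HasDerivAt g g' t) :
    HasDerivAt (fun s => f s ⬝ᵥ g s) (f' ⬝ᵥ g t + f t ⬝ᵥ g') t := by
  have hfi : ∀ i, HasDerivAt (fun s => f s i) (f' i) t := fun i =>
    ((ContinuousLinearMap.proj i : (Fin 3 → ℝ) →L[ℝ] ℝ).hasFDerivAt.comp_hasDerivAt t hf)
  have hgi : ∀ i, HasDerivAt (fun s => g s i) (g' i) t := fun i =>
    ((ContinuousLinearMap.proj i : (Fin 3 → ℝ) →L[ℝ] ℝ).hasFDerivAt.comp_hasDerivAt t hg)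
  have h := (((hfi 0).mul (hgi 0)).add ((hfi 1).mul (hgi 1))).add ((hfi 2).mul (hgi 2))
  have he : (fun s => f s ⬝ᵥ g s) = fun s => (f s 0 * g s 0 + f s 1 * g s 1) + f s 2 * g s 2 := by
    funext s; simp [dotProduct, Fin.sum_univ_three]
  rw [he]
  refine h.congr_deriv ?_
  simp [dotProduct, Fin.sum_univ_three]
  ring

/-- If a framed curve `(y, d₁, d₂, d₃)` with `y' = d₁`, `d₁'·d₂ = 0` a.e. is planar
(`d₁ · k ≡ 0` for a unit vector `k`) and has positive curvature `d₁'·d₃ > 0` a.e.,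
then `d₂` is constant, equal to `k` or `−k`. -/
theorem planar_frame_d2_const (ℓ : ℝ) (hℓ : 0 < ℓ)
    (y d₁ d₂ d₃ : ℝ → Fin 3 → ℝ) (k : Fin 3 → ℝ)
    (hy : ∀ t ∈ Set.Ioo 0 ℓ, HasDerivAt y (d₁ t) t)
    (hd₂cont : ContinuousOn d₂ (Set.Icc 0 ℓ))
    (hdiff : ∀ t ∈ Set.Ioo 0 ℓ, DifferentiableAt ℝ d₁ t ∧ DifferentiableAt ℝ d₂ t)
    (hframe : ∀ t ∈ Set.Icc 0 ℓ,
      d₁ t ⬝ᵥ d₁ t = 1 ∧ d₂ t ⬝ᵥ d₂ t = 1 ∧ d₁ t ⬝ᵥ d₂ t = 0 ∧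
      d₃ t = d₁ t ⨯₃ d₂ t)
    (hconstraint : ∀ᵐ t ∂(volume.restrict (Set.Ioo 0 ℓ)), deriv d₁ t ⬝ᵥ d₂ t = 0)
    (hk : k ⬝ᵥ k = 1)
    (hplanar : ∀ t ∈ Set.Icc 0 ℓ, d₁ t ⬝ᵥ k = 0)
    (hpos : ∀ᵐ t ∂(volume.restrict (Set.Ioo 0 ℓ)), 0 < deriv d₁ t ⬝ᵥ d₃ t) :
    (∀ t ∈ Set.Icc 0 ℓ, d₂ t = k) ∨ (∀ t ∈ Set.Icc 0 ℓ, d₂ t = -k) := by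
  have hIcc : Set.Ioo (0:ℝ) ℓ ⊆ Set.Icc 0 ℓ := Set.Ioo_subset_Icc_self
  set f : ℝ → ℝ := fun t => k ⬝ᵥ d₂ t with hf_def
  -- f is continuous on Icc
  have hdotcont : Continuous (fun v : Fin 3 → ℝ => k ⬝ᵥ v) := by
    simp only [dotProduct]
    exact continuous_finset_sum _ fun i _ => continuous_const.mul (continuous_apply i)
  have hfcont : ContinuousOn f (Set.Icc 0 ℓ) := hdotcont.comp_continuousOn hd₂cont
  -- derivative orthogonality facts on the open interval
  have hd1d1 : ∀ t ∈ Set.Ioo (0:ℝ) ℓ, deriv d₁ t ⬝ᵥ d₁ t = 0 := by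
    intro t ht
    have hD : HasDerivAt d₁ (deriv d₁ t) t := ((hdiff t ht).1).hasDerivAt
    have h1 := hasDerivAt_dot hD hD
    have h2 : HasDerivAt (fun s => d₁ s ⬝ᵥ d₁ s) 0 t := by
      have hEq : (fun s => d₁ s ⬝ᵥ d₁ s) =ᶠ[nhds t] fun _ => (1:ℝ) := by
        filter_upwards [Ioo_mem_nhds ht.1 ht.2] with s hs
        exact (hframe s (hIcc hs)).1
      exact (hasDerivAt_const t (1:ℝ)).congr_of_eventuallyEq hEq
    have h3 := h1.unique h2
    have h4 : d₁ t ⬝ᵥ deriv d₁ t = deriv d₁ t ⬝ᵥ d₁ t := dotProduct_comm _ _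
    rw [h4] at h3; linarith
  have hd1k : ∀ t ∈ Set.Ioo (0:ℝ) ℓ, deriv d₁ t ⬝ᵥ k = 0 := by
    intro t ht
    have hD : HasDerivAt d₁ (deriv d₁ t) t := ((hdiff t ht).1).hasDerivAt
    have h1 := hasDerivAt_dot hD (hasDerivAt_const t k)
    have h2 : HasDerivAt (fun s => d₁ s ⬝ᵥ k) 0 t := by
      have hEq : (fun s => d₁ s ⬝ᵥ k) =ᶠ[nhds t] fun _ => (0:ℝ) := by
        filter_upwards [Ioo_mem_nhds ht.1 ht.2] with s hs
        exact hplanar s (hIcc hs)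
      exact (hasDerivAt_const t (0:ℝ)).congr_of_eventuallyEq hEq
    have h3 := h1.unique h2
    simpa using h3
  -- pointwise decomposition of |k|² on Icc
  have hsum : ∀ t ∈ Set.Icc (0:ℝ) ℓ, (k ⬝ᵥ d₂ t)^2 + (k ⬝ᵥ d₃ t)^2 = 1 := by
    intro t ht
    obtain ⟨h11, h22, h12, h3⟩ := hframe t ht
    have hka : k ⬝ᵥ d₁ t = 0 := by rw [dotProduct_comm]; exact hplanar t ht
    have hid := dot_cross_identity (d₁ t) (d₂ t) k k
    rw [← h3, h11, h22, h12, hka, hk] at hid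
    nlinarith [hid]
  -- a.e. on Ioo, f t ^ 2 = 1
  have h_ae : ∀ᵐ t ∂(volume.restrict (Set.Ioo 0 ℓ)), (k ⬝ᵥ d₂ t)^2 = 1 := by
    filter_upwards [hconstraint, hpos, ae_restrict_mem measurableSet_Ioo] with t hc hp ht
    obtain ⟨h11, h22, h12, h3⟩ := hframe t (hIcc ht)
    have hka : k ⬝ᵥ d₁ t = 0 := by rw [dotProduct_comm]; exact hplanar t (hIcc ht)
    have hid := dot_cross_identity (d₁ t) (d₂ t) (deriv d₁ t) k
    rw [← h3, h11, h22, h12, hd1d1 t ht, hd1k t ht, hc, hka] at hid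
    have hzero : k ⬝ᵥ d₃ t = 0 := by
      have hmul : deriv d₁ t ⬝ᵥ d₃ t * (k ⬝ᵥ d₃ t) = 0 := by linear_combination hid
      rcases mul_eq_zero.mp hmul with h | h
      · exact absurd h (ne_of_gt hp)
      · exact h
    have := hsum t (hIcc ht)
    rw [hzero] at this
    nlinarith [this]
  -- everywhere on Icc, f t ^2 = 1 (continuity + a.e.)
  have hsq : ∀ t ∈ Set.Icc (0:ℝ) ℓ, (f t)^2 = 1 := by
    intro t ht
    by_contra hne
    have hct : ContinuousWithinAt (fun s => (f s)^2) (Set.Icc 0 ℓ) t :=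
      ((hfcont t ht).pow 2)
    have hev : ∀ᶠ s in nhdsWithin t (Set.Icc 0 ℓ), (f s)^2 ≠ 1 :=
      hct.eventually_ne hne
    rw [eventually_nhdsWithin_iff] at hev
    obtain ⟨U, hUsub, hUopen, htU⟩ := eventually_nhds_iff.mp hev
    have htcl : t ∈ closure (Set.Ioo (0:ℝ) ℓ) := by
      rw [closure_Ioo hℓ.ne]; exact ht
    obtain ⟨s₀, hs₀U, hs₀I⟩ := mem_closure_iff.mp htcl U hUopen htU
    set W := U ∩ Set.Ioo (0:ℝ) ℓ with hW
    have hWopen : IsOpen W := hUopen.inter isOpen_Ioo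
    have hWne : W.Nonempty := ⟨s₀, hs₀U, hs₀I⟩
    have h0 : (volume.restrict (Set.Ioo (0:ℝ) ℓ)) {s | ¬ ((k ⬝ᵥ d₂ s)^2 = 1)} = 0 :=
      ae_iff.mp h_ae
    have hWsub : W ⊆ {s | ¬ ((k ⬝ᵥ d₂ s)^2 = 1)} := by
      intro s hs
      exact hUsub s hs.1 (hIcc hs.2)
    have hW0 : (volume.restrict (Set.Ioo (0:ℝ) ℓ)) W = 0 := measure_mono_null hWsub h0
    rw [Measure.restrict_apply hWopen.measurableSet] at hW0
    have hWinter : W ∩ Set.Ioo (0:ℝ) ℓ = W := Set.inter_eq_self_of_subset_left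
      (Set.inter_subset_right)
    rw [hWinter] at hW0
    exact (hWopen.measure_pos volume hWne).ne' hW0
  have hpm : ∀ t ∈ Set.Icc (0:ℝ) ℓ, f t = 1 ∨ f t = -1 := by
    intro t ht
    have h := hsq t ht
    have : (f t - 1) * (f t + 1) = 0 := by nlinarith [h]
    rcases mul_eq_zero.mp this with h' | h'
    · left; linarith
    · right; linarith
  -- from f t = 1 conclude d₂ t = k  (and similarly for -1)
  have hconv : ∀ t ∈ Set.Icc (0:ℝ) ℓ, f t = 1 → d₂ t = k := by
    intro t ht hft
    obtain ⟨_, h22, _, _⟩ := hframe t ht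
    have e1 := h22; have e2 := hk; have e3 := hft
    simp only [hf_def, dotProduct, Fin.sum_univ_three] at e1 e2 e3
    have hsq0 : (d₂ t 0 - k 0)^2 + (d₂ t 1 - k 1)^2 + (d₂ t 2 - k 2)^2 = 0 := by
      linear_combination e1 + e2 - 2 * e3
    have z0 : (d₂ t 0 - k 0)^2 = 0 := by
      linarith [hsq0, sq_nonneg (d₂ t 0 - k 0), sq_nonneg (d₂ t 1 - k 1), sq_nonneg (d₂ t 2 - k 2)]
    have z1 : (d₂ t 1 - k 1)^2 = 0 := by
      linarith [hsq0, sq_nonneg (d₂ t 0 - k 0), sq_nonneg (d₂ t 1 - k 1), sq_nonneg (d₂ t 2 - k 2)]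
    have z2 : (d₂ t 2 - k 2)^2 = 0 := by
      linarith [hsq0, sq_nonneg (d₂ t 0 - k 0), sq_nonneg (d₂ t 1 - k 1), sq_nonneg (d₂ t 2 - k 2)]
    have c0 : d₂ t 0 = k 0 := by
      have := pow_eq_zero_iff (two_ne_zero) |>.mp z0; linarith
    have c1 : d₂ t 1 = k 1 := by
      have := pow_eq_zero_iff (two_ne_zero) |>.mp z1; linarith
    have c2 : d₂ t 2 = k 2 := by
      have := pow_eq_zero_iff (two_ne_zero) |>.mp z2; linarith
    funext i
    fin_cases i
    · exact c0
    · exact c1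
    · exact c2
  have hconv' : ∀ t ∈ Set.Icc (0:ℝ) ℓ, f t = -1 → d₂ t = -k := by
    intro t ht hft
    obtain ⟨_, h22, _, _⟩ := hframe t ht
    have e1 := h22; have e2 := hk; have e3 := hft
    simp only [hf_def, dotProduct, Fin.sum_univ_three] at e1 e2 e3
    have hsq0 : (d₂ t 0 + k 0)^2 + (d₂ t 1 + k 1)^2 + (d₂ t 2 + k 2)^2 = 0 := by
      linear_combination e1 + e2 + 2 * e3
    have z0 : (d₂ t 0 + k 0)^2 = 0 := by
      linarith [hsq0, sq_nonneg (d₂ t 0 + k 0), sq_nonneg (d₂ t 1 + k 1), sq_nonneg (d₂ t 2 + k 2)]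
    have z1 : (d₂ t 1 + k 1)^2 = 0 := by
      linarith [hsq0, sq_nonneg (d₂ t 0 + k 0), sq_nonneg (d₂ t 1 + k 1), sq_nonneg (d₂ t 2 + k 2)]
    have z2 : (d₂ t 2 + k 2)^2 = 0 := by
      linarith [hsq0, sq_nonneg (d₂ t 0 + k 0), sq_nonneg (d₂ t 1 + k 1), sq_nonneg (d₂ t 2 + k 2)]
    have c0 : d₂ t 0 = -k 0 := by
      have := pow_eq_zero_iff (two_ne_zero) |>.mp z0; linarith
    have c1 : d₂ t 1 = -k 1 := by
      have := pow_eq_zero_iff (two_ne_zero) |>.mp z1; linarith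
    have c2 : d₂ t 2 = -k 2 := by
      have := pow_eq_zero_iff (two_ne_zero) |>.mp z2; linarith
    funext i
    fin_cases i
    · exact c0
    · exact c1
    · exact c2
  have h0mem : (0:ℝ) ∈ Set.Icc (0:ℝ) ℓ := ⟨le_refl 0, hℓ.le⟩
  -- no sign change: IVT
  have hnomix : ∀ t₁ ∈ Set.Icc (0:ℝ) ℓ, ∀ t₂ ∈ Set.Icc (0:ℝ) ℓ,
      f t₁ = 1 → f t₂ = -1 → False := by
    intro t₁ ht₁ t₂ ht₂ h1 h2
    have huIcc : Set.uIcc t₁ t₂ ⊆ Set.Icc (0:ℝ) ℓ :=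
      Set.ordConnected_Icc.uIcc_subset ht₁ ht₂
    have hivt := intermediate_value_uIcc (hfcont.mono huIcc)
    have h0mem' : (0:ℝ) ∈ Set.uIcc (f t₁) (f t₂) := by
      rw [h1, h2]
      exact Set.mem_uIcc.mpr (Or.inr ⟨by norm_num, by norm_num⟩)
    obtain ⟨s, hs, hfs⟩ := hivt h0mem'
    rcases hpm s (huIcc hs) with h | h <;> rw [hfs] at h <;> norm_num at h
  rcases hpm 0 h0mem with h0 | h0
  · left
    intro t ht
    rcases hpm t ht with h | h
    · exact hconv t ht h
    · exact absurd (hnomix 0 h0mem t ht h0 h) not_false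
  · right
    intro t ht
    rcases hpm t ht with h | h
    · exact absurd (hnomix t ht 0 h0mem h h0) not_false
    · exact hconv' t ht h
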